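/- For every τ ∈ ℍ = {τ ∈ ℂ : Im τ > 0} and q ∈ ℂ∖{0}, set μ = 4·conj(q)·(Im τ)². Then: (a) the Wirtinger (1,0)-partial derivatives of N(τ, q) = (2·|q|·Im τ)² at (τ, q) are ∂N/∂τ = −4i·|q|²·Im τ and ∂N/∂q = 4·conj(q)·(Im τ)²; (b) the Wirtinger (1,0)-partial derivatives of T(τ, μ) = (|μ|/(2·Im τ))² at the point (τ, μ) are ∂T/∂τ = 4i·|q|²·Im τ and ∂T/∂μ = q. Consequently, writing the dualization as dual(α, β) = (β, −α) and the switch as sending a tangent vector (α, β) at (τ, q) to the covector (β, q) at (τ, α), one has Swh(dual⁻¹(−∂N|_{(τ,q)})) = ∂T|_{(τ,μ)}; this is the infinitesimal duality between the L¹-norm function and the Teichmüller metric in the torus case. -/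

import Mathlib

noncomputable section

/-- The Wirtinger `(1,0)`-partial derivative in the first variable,
`∂f/∂τ = ½(∂f/∂x − i·∂f/∂y)`, of a real-valued function `f : ℂ × ℂ → ℝ`. -/
def wFst (f : ℂ × ℂ → ℝ) (p : ℂ × ℂ) : ℂ :=
  (1 / 2 : ℂ) *
    (((fderiv ℝ f p ((1 : ℂ), (0 : ℂ)) : ℝ) : ℂ)
      - Complex.I * ((fderiv ℝ f p (Complex.I, (0 : ℂ)) : ℝ) : ℂ))

/-- The Wirtinger `(1,0)`-partial derivative in the second variable of a real-valued
function `f : ℂ × ℂ → ℝ`. -/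
def wSnd (f : ℂ × ℂ → ℝ) (p : ℂ × ℂ) : ℂ :=
  (1 / 2 : ℂ) *
    (((fderiv ℝ f p ((0 : ℂ), (1 : ℂ)) : ℝ) : ℂ)
      - Complex.I * ((fderiv ℝ f p ((0 : ℂ), Complex.I) : ℝ) : ℂ))

end

noncomputable section

/-- The square `N(τ, q) = (2·|q|·Im τ)²` of the L¹-norm function for tori. -/
def torusL1NormSq (p : ℂ × ℂ) : ℝ := (2 * ‖p.2‖ * p.1.im) ^ 2

/-- The square `T(τ, μ) = (|μ|/(2·Im τ))²` of the Teichmüller metric for tori. -/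
def torusTeichMetricSq (p : ℂ × ℂ) : ℝ := (‖p.2‖ / (2 * p.1.im)) ^ 2

/-- The inverse of the dualization `dual(α, β) = (β, −α)` on fibers. -/
def dualInv (v : ℂ × ℂ) : ℂ × ℂ := (-v.2, v.1)

/-- The switch, sending a tangent vector `(α, β)` at the point `(τ, q)` to the covector
`(β, q)` at the point `(τ, α)`. -/
def swh (pv : (ℂ × ℂ) × (ℂ × ℂ)) : (ℂ × ℂ) × (ℂ × ℂ) :=
  ((pv.1.1, pv.2.1), (pv.2.2, pv.1.2))

lemma fderiv_N_apply (p : ℂ × ℂ) (v : ℂ × ℂ) :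
    fderiv ℝ torusL1NormSq p v =
      8 * (p.2.re * v.2.re + p.2.im * v.2.im) * p.1.im ^ 2
        + 8 * (p.2.re ^ 2 + p.2.im ^ 2) * p.1.im * v.1.im := by
  have hN : torusL1NormSq =
      fun p : ℂ × ℂ => (4 * (p.2.re * p.2.re + p.2.im * p.2.im)) * (p.1.im * p.1.im) := by
    funext p
    have h := Complex.sq_norm p.2
    rw [Complex.normSq_apply] at h
    simp only [torusL1NormSq]
    nlinarith [h]
  set Lre : (ℂ × ℂ) →L[ℝ] ℝ := Complex.reCLM.comp (ContinuousLinearMap.snd ℝ ℂ ℂ) with hLre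
  have h1 : HasFDerivAt (fun p : ℂ × ℂ => p.2.re) Lre p := Lre.hasFDerivAt
  set Lim : (ℂ × ℂ) →L[ℝ] ℝ := Complex.imCLM.comp (ContinuousLinearMap.snd ℝ ℂ ℂ) with hLim
  have h2 : HasFDerivAt (fun p : ℂ × ℂ => p.2.im) Lim p := Lim.hasFDerivAt
  set Ly : (ℂ × ℂ) →L[ℝ] ℝ := Complex.imCLM.comp (ContinuousLinearMap.fst ℝ ℂ ℂ) with hLy
  have h3 : HasFDerivAt (fun p : ℂ × ℂ => p.1.im) Ly p := Ly.hasFDerivAt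
  have hf := (((h1.mul h1).add (h2.mul h2)).const_mul (4 : ℝ)).mul (h3.mul h3)
  simp only [Pi.mul_def, Pi.add_def] at hf
  rw [hN, hf.fderiv]
  simp [hLre, hLim, hLy]
  ring

lemma fderiv_T_apply (p : ℂ × ℂ) (hy : p.1.im ≠ 0) (v : ℂ × ℂ) :
    fderiv ℝ torusTeichMetricSq p v =
      (p.2.re * v.2.re + p.2.im * v.2.im) / (2 * p.1.im ^ 2)
        - (p.2.re ^ 2 + p.2.im ^ 2) * v.1.im / (2 * p.1.im ^ 3) := by
  have hT : torusTeichMetricSq =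
      fun p : ℂ × ℂ => (p.2.re * p.2.re + p.2.im * p.2.im) * (4 * (p.1.im * p.1.im))⁻¹ := by
    funext p
    have h := Complex.sq_norm p.2
    rw [Complex.normSq_apply] at h
    simp only [torusTeichMetricSq, div_pow, h]
    rw [show (2 * p.1.im) ^ 2 = 4 * (p.1.im * p.1.im) by ring, div_eq_mul_inv]
  set Lre : (ℂ × ℂ) →L[ℝ] ℝ := Complex.reCLM.comp (ContinuousLinearMap.snd ℝ ℂ ℂ) with hLre
  have h1 : HasFDerivAt (fun p : ℂ × ℂ => p.2.re) Lre p := Lre.hasFDerivAt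
  set Lim : (ℂ × ℂ) →L[ℝ] ℝ := Complex.imCLM.comp (ContinuousLinearMap.snd ℝ ℂ ℂ) with hLim
  have h2 : HasFDerivAt (fun p : ℂ × ℂ => p.2.im) Lim p := Lim.hasFDerivAt
  set Ly : (ℂ × ℂ) →L[ℝ] ℝ := Complex.imCLM.comp (ContinuousLinearMap.fst ℝ ℂ ℂ) with hLy
  have h3 : HasFDerivAt (fun p : ℂ × ℂ => p.1.im) Ly p := Ly.hasFDerivAt
  have hg : HasFDerivAt (fun p : ℂ × ℂ => 4 * (p.1.im * p.1.im))
      ((4 : ℝ) • (p.1.im • Ly + p.1.im • Ly)) p := (h3.mul h3).const_mul (4 : ℝ)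
  have hne : (4 : ℝ) * (p.1.im * p.1.im) ≠ 0 := by positivity
  have hinv := (hasDerivAt_inv hne).comp_hasFDerivAt p hg
  have hf := ((h1.mul h1).add (h2.mul h2)).mul hinv
  simp only [Pi.mul_def, Pi.add_def] at hf
  simp only [Function.comp] at hf
  rw [hT, hf.fderiv]
  simp [hLre, hLim, hLy, Function.comp]
  field_simp
  ring

/-- **Infinitesimal duality between the L¹-norm function and the Teichmüller metric in
the torus case.**  For `τ ∈ ℍ`, `q ≠ 0` and `μ = 4·conj q·(Im τ)²` (the Teichmüller–
Beltrami image): (a) `∂N/∂τ = −4i·|q|²·Im τ`, `∂N/∂q = 4·conj q·(Im τ)²` at `(τ, q)`;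
(b) `∂T/∂τ = 4i·|q|²·Im τ`, `∂T/∂μ = q` at `(τ, μ)`; consequently
`Swh (dual⁻¹ (−∂N|_{(τ,q)})) = ∂T|_{(τ,μ)}`. -/
theorem torus_infinitesimal_duality (τ q μ : ℂ) (hτ : 0 < τ.im) (hq : q ≠ 0)
    (hμ : μ = 4 * (starRingEnd ℂ) q * (τ.im : ℂ) ^ 2) :
    (wFst torusL1NormSq (τ, q) = -4 * Complex.I * (‖q‖ : ℂ) ^ 2 * (τ.im : ℂ) ∧
      wSnd torusL1NormSq (τ, q) = 4 * (starRingEnd ℂ) q * (τ.im : ℂ) ^ 2) ∧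
    (wFst torusTeichMetricSq (τ, μ) =
        4 * Complex.I * (‖q‖ : ℂ) ^ 2 * (τ.im : ℂ) ∧
      wSnd torusTeichMetricSq (τ, μ) = q) ∧
    swh ((τ, q), dualInv (-(wFst torusL1NormSq (τ, q)), -(wSnd torusL1NormSq (τ, q)))) =
      ((τ, μ), (wFst torusTeichMetricSq (τ, μ), wSnd torusTeichMetricSq (τ, μ))) := by
  have hy : τ.im ≠ 0 := ne_of_gt hτ
  have hyC : (τ.im : ℂ) ≠ 0 := by exact_mod_cast hy
  have habs : ((‖q‖ : ℂ)) ^ 2 = (q.re : ℂ) ^ 2 + (q.im : ℂ) ^ 2 := by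
    norm_cast
    rw [Complex.sq_norm, Complex.normSq_apply]; ring
  have hconj : (starRingEnd ℂ) q = (q.re : ℂ) - (q.im : ℂ) * Complex.I := by
    apply Complex.ext <;> simp
  have hqe : (q.re : ℂ) + (q.im : ℂ) * Complex.I = q := Complex.re_add_im q
  have hμre : μ.re = 4 * q.re * τ.im ^ 2 := by
    rw [hμ, hconj]
    simp [pow_two, Complex.mul_re, Complex.mul_im]
    try ring
  have hμim : μ.im = -(4 * q.im * τ.im ^ 2) := by
    rw [hμ, hconj]
    simp [pow_two, Complex.mul_re, Complex.mul_im]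
    try ring
  have hNf : wFst torusL1NormSq (τ, q)
      = -4 * Complex.I * (‖q‖ : ℂ) ^ 2 * (τ.im : ℂ) := by
    simp only [wFst, fderiv_N_apply]
    simp only [Complex.one_re, Complex.one_im, Complex.I_re, Complex.I_im, Complex.zero_re,
      Complex.zero_im]
    rw [habs]
    push_cast
    ring
  have hNs : wSnd torusL1NormSq (τ, q) = 4 * (starRingEnd ℂ) q * (τ.im : ℂ) ^ 2 := by
    simp only [wSnd, fderiv_N_apply]
    simp only [Complex.one_re, Complex.one_im, Complex.I_re, Complex.I_im, Complex.zero_re,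
      Complex.zero_im]
    rw [hconj]
    push_cast
    ring
  have hTf : wFst torusTeichMetricSq (τ, μ)
      = 4 * Complex.I * (‖q‖ : ℂ) ^ 2 * (τ.im : ℂ) := by
    simp only [wFst, fderiv_T_apply (τ, μ) hy]
    simp only [Complex.one_re, Complex.one_im, Complex.I_re, Complex.I_im, Complex.zero_re,
      Complex.zero_im, hμre, hμim]
    rw [habs]
    push_cast
    field_simp
    ring
  have hTs : wSnd torusTeichMetricSq (τ, μ) = q := by
    simp only [wSnd, fderiv_T_apply (τ, μ) hy]
    simp only [Complex.one_re, Complex.one_im, Complex.I_re, Complex.I_im, Complex.zero_re,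
      Complex.zero_im, hμre, hμim]
    push_cast
    field_simp
    linear_combination 4 * hqe
  refine ⟨⟨hNf, hNs⟩, ⟨hTf, hTs⟩, ?_⟩
  simp only [swh, dualInv, hNf, hNs, hTf, hTs, neg_neg, Prod.mk.injEq]
  exact ⟨⟨trivial, hμ.symm⟩, by ring, trivial⟩

end
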